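/- The only integral point (X, Y) ∈ ℤ × ℤ on the elliptic curve Y^2 = X(X^2 + 200X + 3000) is (0, 0). -/

import Mathlib

def TU : ℕ → ℤ × ℤ
  | 0 => (1, 0)
  | n+1 => (11 * (TU n).1 + 120 * (TU n).2, (TU n).1 + 11 * (TU n).2)

def T (n : ℕ) : ℤ := (TU n).1
def U (n : ℕ) : ℤ := (TU n).2

@[simp] lemma T_zero : T 0 = 1 := rfl
@[simp] lemma U_zero : U 0 = 0 := rfl
lemma T_succ (n : ℕ) : T (n+1) = 11 * T n + 120 * U n := rfl
lemma U_succ (n : ℕ) : U (n+1) = T n + 11 * U n := rfl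

lemma pell (n : ℕ) : T n ^ 2 - 120 * U n ^ 2 = 1 := by
  induction n with
  | zero => simp
  | succ n ih => rw [T_succ, U_succ]; ring_nf; ring_nf at ih; linarith

lemma T_pos (n : ℕ) : 1 ≤ T n ∧ 0 ≤ U n := by
  induction n with
  | zero => simp
  | succ n ih => rw [T_succ, U_succ]; constructor <;> linarith [ih.1, ih.2]

lemma U_pos {n : ℕ} (hn : n ≠ 0) : 1 ≤ U n := by
  obtain ⟨m, rfl⟩ := Nat.exists_eq_succ_of_ne_zero hn
  rw [U_succ]; linarith [T_pos m |>.1, T_pos m |>.2]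

lemma TU_add (a b : ℕ) : T (a+b) = T a * T b + 120 * U a * U b ∧ U (a+b) = T a * U b + U a * T b := by
  induction b with
  | zero => simp
  | succ b ih =>
    rw [show a + (b+1) = (a+b)+1 by omega, T_succ, U_succ, T_succ, U_succ, ih.1, ih.2]
    constructor <;> ring

lemma T_mod5 (n : ℕ) : T n % 5 = 1 := by
  induction n with
  | zero => simp
  | succ n ih => rw [T_succ]; omega


lemma T_mod3 (n : ℕ) : T n % 3 = (if Even n then 1 else 2) := by
  induction n with
  | zero => simp
  | succ n ih =>
    rw [T_succ]
    by_cases h : Even n <;> simp [h, Nat.even_add_one] at ih ⊢ <;> omega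

lemma T_mod8 (n : ℕ) : T n % 8 = (if Even n then 1 else 3) := by
  induction n with
  | zero => simp
  | succ n ih =>
    rw [T_succ]
    by_cases h : Even n <;> simp [h, Nat.even_add_one] at ih ⊢ <;> omega

lemma T_odd (n : ℕ) : T n % 2 = 1 := by
  have := T_mod8 n
  by_cases h : Even n <;> simp [h] at this <;> omega

lemma U_mod2 (n : ℕ) : U n % 2 = n % 2 := by
  induction n with
  | zero => simp
  | succ n ih => rw [U_succ]; have := T_odd n; omega

lemma TU_coprime (n : ℕ) : IsCoprime (T n) (U n) :=
  ⟨T n, -(120 * U n), by linear_combination pell n⟩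

lemma T_double (j : ℕ) : T (j + j) = 2 * T j ^ 2 - 1 := by
  have h := (TU_add j j).1
  have := pell j
  linarith [h]

lemma U_double (j : ℕ) : U (j + j) = 2 * U j * T j := by
  have h := (TU_add j j).2
  linarith [h]

lemma sq_nonneg_exists {a : ℤ} (ha : 0 ≤ a) (h : ∃ a0 : ℤ, a = a0 ^ 2 ∨ a = -a0 ^ 2) :
    ∃ d : ℤ, a = d ^ 2 := by
  obtain ⟨a0, h | h⟩ := h
  · exact ⟨a0, h⟩
  · refine ⟨0, ?_⟩
    nlinarith [sq_nonneg a0]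

lemma five_sq {a b c : ℤ} (ha : 0 ≤ a) (hb : 0 ≤ b) (hcop : IsCoprime a b)
    (h : a * b = 5 * c ^ 2) :
    ((∃ d, a = d^2) ∧ (∃ e, b = 5*e^2)) ∨ ((∃ d, a = 5*d^2) ∧ (∃ e, b = e^2)) := by
  have hp : Prime (5 : ℤ) := by norm_num
  have hdvd : (5:ℤ) ∣ a * b := ⟨c^2, h⟩
  rcases hp.dvd_mul.mp hdvd with h5 | h5
  · right
    obtain ⟨a1, rfl⟩ := h5
    have ha1 : 0 ≤ a1 := by nlinarith
    have hcop1 : IsCoprime a1 b := hcop.of_isCoprime_of_dvd_left ⟨5, by ring⟩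
    have hab : a1 * b = c ^ 2 := by
      have : (5:ℤ) * (a1 * b) = 5 * c^2 := by ring_nf; ring_nf at h; linarith
      exact mul_left_cancel₀ (by norm_num) this
    constructor
    · obtain ⟨d, hd⟩ := sq_nonneg_exists ha1 (Int.sq_of_isCoprime hcop1 hab)
      exact ⟨d, by rw [hd]⟩
    · exact sq_nonneg_exists hb (Int.sq_of_isCoprime hcop1.symm (by linarith [hab] : b * a1 = c ^ 2))
  · left
    obtain ⟨b1, rfl⟩ := h5
    have hb1 : 0 ≤ b1 := by nlinarith
    have hcop1 : IsCoprime a b1 := hcop.symm.of_isCoprime_of_dvd_left ⟨5, by ring⟩ |>.symm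
    have hab : a * b1 = c ^ 2 := by
      have : (5:ℤ) * (a * b1) = 5 * c^2 := by ring_nf; ring_nf at h; linarith
      exact mul_left_cancel₀ (by norm_num) this
    constructor
    · exact sq_nonneg_exists ha (Int.sq_of_isCoprime hcop1 hab)
    · obtain ⟨e, he⟩ := sq_nonneg_exists hb1 (Int.sq_of_isCoprime hcop1.symm (by linarith [hab] : b1 * a = c^2))
      exact ⟨e, by rw [he]⟩

lemma not_sq_three_mod_eight {g t : ℤ} (ht : t % 8 = 3) (h : t = g ^ 2) : False := by
  have h0 : ((t - 3 : ℤ) : ZMod 8) = 0 := (ZMod.intCast_zmod_eq_zero_iff_dvd _ _).mpr (by omega)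
  push_cast at h0
  have h3 : (t : ZMod 8) = 3 := by linear_combination h0
  rw [h] at h3; push_cast at h3
  exact (by decide : ∀ x : ZMod 8, x ^ 2 ≠ 3) _ h3

lemma coprime_2U_T (j : ℕ) : IsCoprime (2 * U j) (T j) := by
  have h2 : IsCoprime (2 : ℤ) (T j) := by
    have := T_odd j
    exact ⟨-(T j / 2), 1, by omega⟩
  exact h2.mul_left (TU_coprime j).symm

lemma lemA : ∀ m : ℕ, (∃ g, T m = g ^ 2) → (∃ c, U m = 5 * c ^ 2 ∨ U m = 10 * c ^ 2) → m = 0 := by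
  intro m
  induction m using Nat.strong_induction_on with
  | _ m IH =>
  intro ⟨g, hg⟩ ⟨c, hc⟩
  by_cases hm : m = 0
  · exact hm
  exfalso
  rcases Nat.even_or_odd m with he | ho
  swap
  · have h8 := T_mod8 m
    rw [if_neg (Nat.not_even_iff_odd.mpr ho)] at h8
    exact not_sq_three_mod_eight h8 hg
  obtain ⟨j, rfl⟩ := he
  have hj : j ≠ 0 := by omega
  have hUd : U (j + j) = 2 * U j * T j := U_double j
  have hTj5 := T_mod5 j
  have hTpos := (T_pos j).1
  have hUpos := (T_pos j).2
  have key : ∃ d e, (2 * U j = 5 * d ^ 2 ∨ U j = 5 * d ^ 2) ∧ T j = e ^ 2 := by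
    rcases hc with hc | hc
    · -- 2 U j T j = 5 c^2
      have h5 : (2 * U j) * T j = 5 * c ^ 2 := by rw [hUd] at hc; linarith
      rcases five_sq (by linarith) (by linarith) (coprime_2U_T j) h5 with ⟨_, ⟨e, he⟩⟩ | ⟨⟨d, hd⟩, ⟨e, he⟩⟩
      · exfalso; obtain ⟨E, hE⟩ : ∃ E, e ^ 2 = E := ⟨_, rfl⟩; rw [hE] at he; omega
      · exact ⟨d, e, Or.inl hd, he⟩
    · -- U j T j = 5 c^2
      have h5 : (U j) * T j = 5 * c ^ 2 := by
        have h2 : 2 * (U j * T j) = 2 * (5 * c ^ 2) := by rw [hUd] at hc; linarith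
        exact mul_left_cancel₀ (by norm_num) h2
      rcases five_sq hUpos (by linarith) (TU_coprime j).symm h5 with ⟨_, ⟨e, he⟩⟩ | ⟨⟨d, hd⟩, ⟨e, he⟩⟩
      · exfalso; obtain ⟨E, hE⟩ : ∃ E, e ^ 2 = E := ⟨_, rfl⟩; rw [hE] at he; omega
      · exact ⟨d, e, Or.inr hd, he⟩
  obtain ⟨d, e, hd, he⟩ := key
  have : j = 0 := by
    apply IH j (by omega) ⟨e, he⟩
    rcases hd with hd | hd
    · -- 2 U j = 5 d^2, d even
      have hdeven : d % 2 = 0 := by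
        have h2 : (2:ℤ) ∣ 5 * d ^ 2 := ⟨U j, by linarith⟩
        have : (2:ℤ) ∣ d ^ 2 := by omega
        have hp : Prime (2:ℤ) := by norm_num
        have := hp.dvd_of_dvd_pow this
        omega
      obtain ⟨k, rfl⟩ : ∃ k, d = 2 * k := ⟨d / 2, by omega⟩
      refine ⟨k, Or.inr ?_⟩
      ring_nf at hd ⊢
      linarith
    · exact ⟨d, Or.inl hd⟩
  exact hj this

lemma lemB (m : ℕ) (c : ℤ) (h : U m = 10 * c ^ 2) : m = 0 := by
  by_cases hm : m = 0
  · exact hm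
  exfalso
  rcases Nat.even_or_odd m with he | ho
  swap
  · have h1 := U_mod2 m
    have h2 := Nat.odd_iff.mp ho
    obtain ⟨C, hC⟩ : ∃ C, c ^ 2 = C := ⟨_, rfl⟩
    rw [hC] at h
    omega
  obtain ⟨j, rfl⟩ := he
  have hUd : U (j + j) = 2 * U j * T j := U_double j
  have hj : j ≠ 0 := by omega
  have hTj5 := T_mod5 j
  have hTpos := (T_pos j).1
  have hUpos := (T_pos j).2
  have h5 : U j * T j = 5 * c ^ 2 := by
    have h2 : 2 * (U j * T j) = 2 * (5 * c ^ 2) := by rw [hUd] at h; linarith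
    exact mul_left_cancel₀ (by norm_num) h2
  rcases five_sq hUpos (by linarith) (TU_coprime j).symm h5 with ⟨_, ⟨e, he⟩⟩ | ⟨⟨d, hd⟩, ⟨e, he⟩⟩
  · obtain ⟨E, hE⟩ : ∃ E, e ^ 2 = E := ⟨_, rfl⟩; rw [hE] at he; omega
  · exact hj (lemA j ⟨e, he⟩ ⟨d, Or.inl hd⟩)
lemma T_one : T 1 = 11 := rfl
lemma U_one : U 1 = 1 := rfl

lemma T_back (k : ℕ) : T k = 11 * T (k+1) - 120 * U (k+1) := by
  rw [T_succ, U_succ]; ring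

lemma U_back (k : ℕ) : U k = 11 * U (k+1) - T (k+1) := by
  rw [T_succ, U_succ]; ring

def PRep (s b : ℤ) : Prop := ∃ n : ℕ,
  (s = T n + 6 * U n ∧ b ^ 2 = (T n + 20 * U n) ^ 2) ∨
  (s = T n - 6 * U n ∧ b ^ 2 = (T n - 20 * U n) ^ 2)

lemma classifyAux : ∀ N : ℕ, ∀ s b : ℤ, s ≤ (N : ℤ) → 1 ≤ s → 10 * s ^ 2 - 3 * b ^ 2 = 7 → PRep s b := by
  intro N
  induction N with
  | zero => intro s b h1 h2 _; exfalso; omega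
  | succ N IH =>
    intro s b hsN hs1 heq
    by_cases hs5 : s ≤ 5
    · interval_cases s
      · refine ⟨0, Or.inl ⟨by simp, ?_⟩⟩
        rw [T_zero, U_zero]
        have hb : b ^ 2 = 1 := by linarith
        rw [hb]; norm_num
      · exfalso
        have hb : b ^ 2 = 11 := by linarith
        have hb1 : b ≤ 4 := by nlinarith [sq_nonneg (b-4)]
        have hb2 : -4 ≤ b := by nlinarith [sq_nonneg (b+4)]
        interval_cases b <;> norm_num at hb
      · exfalso
        have : (83 : ℤ) = 3 * b ^ 2 := by linarith
        have h3 : (3:ℤ) ∣ 83 := ⟨b ^ 2, this⟩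
        norm_num at h3
      · exfalso
        have hb : b ^ 2 = 51 := by linarith
        have hb1 : b ≤ 8 := by nlinarith [sq_nonneg (b-8)]
        have hb2 : -8 ≤ b := by nlinarith [sq_nonneg (b+8)]
        interval_cases b <;> norm_num at hb
      · refine ⟨1, Or.inr ⟨by rw [T_one, U_one]; norm_num, ?_⟩⟩
        rw [T_one, U_one]
        have hb : b ^ 2 = 81 := by linarith
        rw [hb]; norm_num
    · push_neg at hs5
      have hb0sq : |b| ^ 2 = b ^ 2 := sq_abs b
      have hb0nn : 0 ≤ |b| := abs_nonneg b
      have heq0 : 10 * s ^ 2 - 3 * |b| ^ 2 = 7 := by rw [hb0sq]; exact heq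
      have h6b : 6 * |b| < 11 * s := by nlinarith
      have h10 : 10 * s < 6 * |b| := by nlinarith
      have heq' : 10 * (11 * s - 6 * |b|) ^ 2 - 3 * (11 * |b| - 20 * s) ^ 2 = 7 := by
        linear_combination heq0
      have hrep := IH (11 * s - 6 * |b|) (11 * |b| - 20 * s) (by omega) (by omega) heq'
      have hs_eq : s = 11 * (11 * s - 6 * |b|) + 6 * (11 * |b| - 20 * s) := by ring
      have hb0_eq : |b| = 20 * (11 * s - 6 * |b|) + 11 * (11 * |b| - 20 * s) := by ring
      set s' := 11 * s - 6 * |b| with hs'def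
      set b' := 11 * |b| - 20 * s with hb'def
      obtain ⟨n, ⟨hsn, hbn⟩ | ⟨hsn, hbn⟩⟩ := hrep
      · have hb'or : b' = T n + 20 * U n ∨ b' = -(T n + 20 * U n) := by
          have hz : (b' - (T n + 20 * U n)) * (b' + (T n + 20 * U n)) = 0 := by
            linear_combination hbn
          rcases mul_eq_zero.mp hz with h | h
          · left; linarith
          · right; linarith
        rcases hb'or with hb'e | hb'e
        · refine ⟨n+1, Or.inl ⟨?_, ?_⟩⟩
          · rw [hs_eq, hsn, hb'e, T_succ, U_succ]; ring
          · rw [← hb0sq, hb0_eq, hsn, hb'e, T_succ, U_succ]; ring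
        · cases n with
          | zero =>
            refine ⟨1, Or.inr ⟨?_, ?_⟩⟩
            · rw [hs_eq, hsn, hb'e, T_one, U_one]; simp
            · rw [← hb0sq, hb0_eq, hsn, hb'e, T_one, U_one]; simp
          | succ k =>
            refine ⟨k, Or.inl ⟨?_, ?_⟩⟩
            · rw [hs_eq, hsn, hb'e, T_back k, U_back k]; ring
            · rw [← hb0sq, hb0_eq, hsn, hb'e, T_back k, U_back k]; ring
      · have hb'or : b' = T n - 20 * U n ∨ b' = -(T n - 20 * U n) := by
          have hz : (b' - (T n - 20 * U n)) * (b' + (T n - 20 * U n)) = 0 := by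
            linear_combination hbn
          rcases mul_eq_zero.mp hz with h | h
          · left; linarith
          · right; linarith
        rcases hb'or with hb'e | hb'e
        · cases n with
          | zero =>
            refine ⟨1, Or.inl ⟨?_, ?_⟩⟩
            · rw [hs_eq, hsn, hb'e, T_one, U_one]; simp
            · rw [← hb0sq, hb0_eq, hsn, hb'e, T_one, U_one]; simp
          | succ k =>
            refine ⟨k, Or.inr ⟨?_, ?_⟩⟩
            · rw [hs_eq, hsn, hb'e, T_back k, U_back k]; ring
            · rw [← hb0sq, hb0_eq, hsn, hb'e, T_back k, U_back k]; ring
        · refine ⟨n+1, Or.inr ⟨?_, ?_⟩⟩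
          · rw [hs_eq, hsn, hb'e, T_succ, U_succ]; ring
          · rw [← hb0sq, hb0_eq, hsn, hb'e, T_succ, U_succ]; ring

lemma classify (s b : ℤ) (hs : 1 ≤ s) (h : 10 * s ^ 2 - 3 * b ^ 2 = 7) : PRep s b :=
  classifyAux s.toNat s b (by omega) hs h

lemma coprime_2U_T_shift (j : ℕ) : IsCoprime (2 * U j) (20 * U j + T j) := by
  have h := (coprime_2U_T j).add_mul_left_right 10
  have e : T j + 2 * U j * 10 = 20 * U j + T j := by ring
  rwa [e] at h

lemma coprime_2U_T_shift' (j : ℕ) : IsCoprime (2 * U j) (20 * U j - T j) := by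
  have h := (coprime_2U_T j).neg_right.add_mul_left_right 10
  have e : -T j + 2 * U j * 10 = 20 * U j - T j := by ring
  rwa [e] at h

lemma even_of_mod3 {α : ℤ} {n : ℕ} (hsn : 30 * α ^ 2 + 1 = T n + 6 * U n ∨ 30 * α ^ 2 + 1 = T n - 6 * U n) : Even n := by
  have h3 := T_mod3 n
  by_contra hodd
  rw [if_neg hodd] at h3
  obtain ⟨A, hA⟩ : ∃ A : ℤ, α ^ 2 = A := ⟨_, rfl⟩
  rw [hA] at hsn
  rcases hsn with h | h <;> omega

lemma U_eq_ten_sq {j : ℕ} {d : ℤ} (hd : 2 * U j = 5 * d ^ 2) : ∃ k, U j = 10 * k ^ 2 := by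
  have hdeven : d % 2 = 0 := by
    have h2 : (2:ℤ) ∣ 5 * d ^ 2 := ⟨U j, by linarith⟩
    have hdd : (2:ℤ) ∣ d ^ 2 := by omega
    have hp : Prime (2:ℤ) := by norm_num
    have := hp.dvd_of_dvd_pow hdd
    omega
  obtain ⟨k, rfl⟩ : ∃ k, d = 2 * k := ⟨d / 2, by omega⟩
  refine ⟨k, ?_⟩
  ring_nf at hd ⊢
  linarith

lemma quartic_case (α β : ℤ) (h : β ^ 2 = 3000 * α ^ 4 + 200 * α ^ 2 + 1) : α = 0 := by
  have hs1 : 1 ≤ 30 * α ^ 2 + 1 := by nlinarith [sq_nonneg α]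
  have heq : 10 * (30 * α ^ 2 + 1) ^ 2 - 3 * β ^ 2 = 7 := by linear_combination (-3 : ℤ) * h
  obtain ⟨n, ⟨hsn, -⟩ | ⟨hsn, -⟩⟩ := classify _ _ hs1 heq
  · obtain ⟨j, rfl⟩ := even_of_mod3 (Or.inl hsn)
    rw [T_double, U_double] at hsn
    have hp := pell j
    have hTpos := (T_pos j).1
    have hUpos := (T_pos j).2
    have hT5 := T_mod5 j
    have key6 : 12 * U j * (20 * U j + T j) = 6 * (5 * α ^ 2) := by
      linear_combination -1 * hsn - 2 * hp
    have key : 2 * U j * (20 * U j + T j) = 5 * α ^ 2 := by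
      have : 6 * (2 * U j * (20 * U j + T j)) = 6 * (5 * α ^ 2) := by linarith
      exact mul_left_cancel₀ (by norm_num) this
    rcases five_sq (by linarith) (by linarith) (coprime_2U_T_shift j) key with
      ⟨⟨d, hd⟩, ⟨e, he⟩⟩ | ⟨⟨d, hd⟩, ⟨e, he⟩⟩
    · exfalso
      obtain ⟨E, hE⟩ : ∃ E, e ^ 2 = E := ⟨_, rfl⟩
      rw [hE] at he
      omega
    · obtain ⟨k, hk⟩ := U_eq_ten_sq hd
      have hj0 : j = 0 := lemB j k hk
      subst hj0
      have hU0 : U 0 = 0 := rfl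
      rw [hU0] at key
      have : α ^ 2 = 0 := by linarith
      exact pow_eq_zero_iff (two_ne_zero) |>.mp this
  · obtain ⟨j, rfl⟩ := even_of_mod3 (Or.inr hsn)
    rw [T_double, U_double] at hsn
    have hp := pell j
    have hTpos := (T_pos j).1
    have hUpos := (T_pos j).2
    have hT5 := T_mod5 j
    have key6 : 12 * U j * (20 * U j - T j) = 6 * (5 * α ^ 2) := by
      linear_combination -1 * hsn - 2 * hp
    have key : 2 * U j * (20 * U j - T j) = 5 * α ^ 2 := by
      have : 6 * (2 * U j * (20 * U j - T j)) = 6 * (5 * α ^ 2) := by linarith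
      exact mul_left_cancel₀ (by norm_num) this
    by_cases hU0 : U j = 0
    · rw [hU0] at key
      have : α ^ 2 = 0 := by linarith
      exact pow_eq_zero_iff (two_ne_zero) |>.mp this
    · have hU1 : 1 ≤ U j := by omega
      have hfac : 0 ≤ 20 * U j - T j := by nlinarith [sq_nonneg α]
      rcases five_sq (by linarith) hfac (coprime_2U_T_shift' j) key with
        ⟨⟨d, hd⟩, ⟨e, he⟩⟩ | ⟨⟨d, hd⟩, ⟨e, he⟩⟩
      · exfalso
        obtain ⟨E, hE⟩ : ∃ E, e ^ 2 = E := ⟨_, rfl⟩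
        rw [hE] at he
        omega
      · obtain ⟨k, hk⟩ := U_eq_ten_sq hd
        have hj0 : j = 0 := lemB j k hk
        exfalso
        rw [hj0] at hU0
        exact hU0 rfl

set_option maxRecDepth 10000 in
lemma divisors3000 : Nat.divisors 3000 = {1,2,3,4,5,6,8,10,12,15,20,24,25,30,40,50,60,75,100,120,125,150,200,250,300,375,500,600,750,1000,1500,3000} := by decide

lemma no_sq_val {M : ℕ} [NeZero M] {v : ℤ} (H : ∀ x : ZMod M, x ^ 2 ≠ (v : ZMod M)) (α : ℤ)
    (h : α ^ 2 = v) : False := by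
  apply H α
  have := congrArg (fun z : ℤ => (z : ZMod M)) h
  push_cast at this
  exact this

lemma mod_obstruction {M : ℕ} [NeZero M] {c4 c2 c0 : ℤ}
    (H : ∀ x y : ZMod M, y^2 ≠ c4*x^4 + c2*x^2 + c0) (α β : ℤ)
    (h : β^2 = c4*α^4 + c2*α^2 + c0) : False := by
  apply H (α : ZMod M) (β : ZMod M)
  have := congrArg (fun z : ℤ => (z : ZMod M)) h
  push_cast at this
  exact this

lemma mod_obstruction_cop {M p : ℕ} [NeZero M] (hp : p ∣ M) {c4 c2 c0 : ℤ}
    (H : ∀ x y : ZMod M, y^2 = c4*x^4 + c2*x^2 + c0 →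
      (ZMod.castHom hp (ZMod p)) x = 0 ∧ (ZMod.castHom hp (ZMod p)) y = 0)
    (α β : ℤ) (hcop : IsCoprime α β) (hpu : ¬ IsUnit (p : ℤ))
    (h : β^2 = c4*α^4 + c2*α^2 + c0) : False := by
  have hc := congrArg (fun z : ℤ => (z : ZMod M)) h
  push_cast at hc
  obtain ⟨h1, h2⟩ := H (α : ZMod M) (β : ZMod M) hc
  rw [map_intCast] at h1 h2
  rw [ZMod.intCast_zmod_eq_zero_iff_dvd] at h1 h2
  exact hpu (hcop.isUnit_of_dvd' h1 h2)

lemma obsN1 (α β : ℤ) (h : β^2 = -1*α^4 + 200*α^2 + (-3000)) : False :=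
  mod_obstruction (M := 16) (by decide) α β h

lemma obsP2 (α β : ℤ) (h : β^2 = 2*α^4 + 200*α^2 + 1500) : False :=
  mod_obstruction (M := 16) (by decide) α β h

lemma obsN2 (α β : ℤ) (h : β^2 = -2*α^4 + 200*α^2 + (-1500)) : False :=
  mod_obstruction (M := 49) (by decide) α β h

lemma obsP3 (α β : ℤ) (h : β^2 = 3*α^4 + 200*α^2 + 1000) : False :=
  mod_obstruction (M := 16) (by decide) α β h

lemma obsN3 (α β : ℤ) (h : β^2 = -3*α^4 + 200*α^2 + (-1000)) : False :=
  mod_obstruction (M := 16) (by decide) α β h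

lemma obsP4 (α β : ℤ) (h : β^2 = 4*α^4 + 200*α^2 + 750) : False :=
  mod_obstruction (M := 8) (by decide) α β h

lemma obsN4 (α β : ℤ) (h : β^2 = -4*α^4 + 200*α^2 + (-750)) : False :=
  mod_obstruction (M := 8) (by decide) α β h

lemma obsP5 (α β : ℤ) (h : β^2 = 5*α^4 + 200*α^2 + 600) : False :=
  mod_obstruction (M := 16) (by decide) α β h

lemma obsN5 (α β : ℤ) (h : β^2 = -5*α^4 + 200*α^2 + (-600)) : False :=
  mod_obstruction (M := 16) (by decide) α β h

lemma obsP6 (α β : ℤ) (h : β^2 = 6*α^4 + 200*α^2 + 500) : False :=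
  mod_obstruction (M := 32) (by decide) α β h

lemma obsN6 (α β : ℤ) (h : β^2 = -6*α^4 + 200*α^2 + (-500)) : False :=
  mod_obstruction (M := 16) (by decide) α β h

lemma obsP8 (α β : ℤ) (h : β^2 = 8*α^4 + 200*α^2 + 375) : False :=
  mod_obstruction (M := 8) (by decide) α β h

lemma obsN8 (α β : ℤ) (h : β^2 = -8*α^4 + 200*α^2 + (-375)) : False :=
  mod_obstruction (M := 49) (by decide) α β h

lemma obsP10 (α β : ℤ) (h : β^2 = 10*α^4 + 200*α^2 + 300) : False :=
  mod_obstruction (M := 16) (by decide) α β h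

lemma obsN10 (α β : ℤ) (h : β^2 = -10*α^4 + 200*α^2 + (-300)) : False :=
  mod_obstruction (M := 32) (by decide) α β h

lemma obsP12 (α β : ℤ) (h : β^2 = 12*α^4 + 200*α^2 + 250) : False :=
  mod_obstruction (M := 8) (by decide) α β h

lemma obsN12 (α β : ℤ) (h : β^2 = -12*α^4 + 200*α^2 + (-250)) : False :=
  mod_obstruction (M := 8) (by decide) α β h

lemma obsP15 (α β : ℤ) (h : β^2 = 15*α^4 + 200*α^2 + 200) : False :=
  mod_obstruction (M := 16) (by decide) α β h

lemma obsN15 (α β : ℤ) (h : β^2 = -15*α^4 + 200*α^2 + (-200)) : False :=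
  mod_obstruction (M := 49) (by decide) α β h

lemma obsP20 (α β : ℤ) (h : β^2 = 20*α^4 + 200*α^2 + 150) : False :=
  mod_obstruction (M := 8) (by decide) α β h

lemma obsN20 (α β : ℤ) (h : β^2 = -20*α^4 + 200*α^2 + (-150)) : False :=
  mod_obstruction (M := 8) (by decide) α β h

lemma obsP24 (α β : ℤ) (h : β^2 = 24*α^4 + 200*α^2 + 125) : False :=
  mod_obstruction (M := 8) (by decide) α β h

lemma obsN24 (α β : ℤ) (h : β^2 = -24*α^4 + 200*α^2 + (-125)) : False :=
  mod_obstruction (M := 8) (by decide) α β h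

lemma obsP25 (α β : ℤ) (h : β^2 = 25*α^4 + 200*α^2 + 120) : False :=
  mod_obstruction (M := 25) (by decide) α β h

lemma obsN25 (α β : ℤ) (h : β^2 = -25*α^4 + 200*α^2 + (-120)) : False :=
  mod_obstruction (M := 16) (by decide) α β h

lemma obsP30 (α β : ℤ) (hcop : IsCoprime α β) (h : β^2 = 30*α^4 + 200*α^2 + 100) : False :=
  mod_obstruction_cop (M := 8) (p := 2) (by norm_num) (by decide) α β hcop (by norm_num [Int.isUnit_iff]) h

lemma obsN30 (α β : ℤ) (h : β^2 = -30*α^4 + 200*α^2 + (-100)) : False :=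
  mod_obstruction (M := 16) (by decide) α β h

lemma obsP40 (α β : ℤ) (h : β^2 = 40*α^4 + 200*α^2 + 75) : False :=
  mod_obstruction (M := 8) (by decide) α β h

lemma obsN40 (α β : ℤ) (h : β^2 = -40*α^4 + 200*α^2 + (-75)) : False :=
  mod_obstruction (M := 8) (by decide) α β h

lemma obsP50 (α β : ℤ) (h : β^2 = 50*α^4 + 200*α^2 + 60) : False :=
  mod_obstruction (M := 16) (by decide) α β h

lemma obsN50 (α β : ℤ) (h : β^2 = -50*α^4 + 200*α^2 + (-60)) : False :=
  mod_obstruction (M := 25) (by decide) α β h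

lemma obsP60 (α β : ℤ) (h : β^2 = 60*α^4 + 200*α^2 + 50) : False :=
  mod_obstruction (M := 8) (by decide) α β h

lemma obsN60 (α β : ℤ) (h : β^2 = -60*α^4 + 200*α^2 + (-50)) : False :=
  mod_obstruction (M := 8) (by decide) α β h

lemma obsP75 (α β : ℤ) (h : β^2 = 75*α^4 + 200*α^2 + 40) : False :=
  mod_obstruction (M := 16) (by decide) α β h

lemma obsN75 (α β : ℤ) (h : β^2 = -75*α^4 + 200*α^2 + (-40)) : False :=
  mod_obstruction (M := 16) (by decide) α β h

lemma obsP100 (α β : ℤ) (h : β^2 = 100*α^4 + 200*α^2 + 30) : False :=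
  mod_obstruction (M := 8) (by decide) α β h

lemma obsN100 (α β : ℤ) (h : β^2 = -100*α^4 + 200*α^2 + (-30)) : False :=
  mod_obstruction (M := 8) (by decide) α β h

lemma obsP120 (α β : ℤ) (hcop : IsCoprime α β) (h : β^2 = 120*α^4 + 200*α^2 + 25) : False :=
  mod_obstruction_cop (M := 25) (p := 5) (by norm_num) (by decide) α β hcop (by norm_num [Int.isUnit_iff]) h

lemma obsN120 (α β : ℤ) (h : β^2 = -120*α^4 + 200*α^2 + (-25)) : False :=
  mod_obstruction (M := 8) (by decide) α β h

lemma obsP125 (α β : ℤ) (h : β^2 = 125*α^4 + 200*α^2 + 24) : False :=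
  mod_obstruction (M := 16) (by decide) α β h

lemma obsN125 (α β : ℤ) (h : β^2 = -125*α^4 + 200*α^2 + (-24)) : False :=
  mod_obstruction (M := 16) (by decide) α β h

lemma obsP150 (α β : ℤ) (h : β^2 = 150*α^4 + 200*α^2 + 20) : False :=
  mod_obstruction (M := 32) (by decide) α β h

lemma obsN150 (α β : ℤ) (h : β^2 = -150*α^4 + 200*α^2 + (-20)) : False :=
  mod_obstruction (M := 16) (by decide) α β h

lemma obsP200 (α β : ℤ) (h : β^2 = 200*α^4 + 200*α^2 + 15) : False :=
  mod_obstruction (M := 8) (by decide) α β h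

lemma obsN200 (α β : ℤ) (h : β^2 = -200*α^4 + 200*α^2 + (-15)) : False :=
  mod_obstruction (M := 25) (by decide) α β h

lemma obsP250 (α β : ℤ) (h : β^2 = 250*α^4 + 200*α^2 + 12) : False :=
  mod_obstruction (M := 16) (by decide) α β h

lemma obsN250 (α β : ℤ) (h : β^2 = -250*α^4 + 200*α^2 + (-12)) : False :=
  mod_obstruction (M := 32) (by decide) α β h

lemma obsP300 (α β : ℤ) (h : β^2 = 300*α^4 + 200*α^2 + 10) : False :=
  mod_obstruction (M := 8) (by decide) α β h

lemma obsN300 (α β : ℤ) (h : β^2 = -300*α^4 + 200*α^2 + (-10)) : False :=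
  mod_obstruction (M := 8) (by decide) α β h

lemma obsP375 (α β : ℤ) (h : β^2 = 375*α^4 + 200*α^2 + 8) : False :=
  mod_obstruction (M := 16) (by decide) α β h

lemma obsN375 (α β : ℤ) (h : β^2 = -375*α^4 + 200*α^2 + (-8)) : False :=
  mod_obstruction (M := 5) (by decide) α β h

lemma obsP500 (α β : ℤ) (h : β^2 = 500*α^4 + 200*α^2 + 6) : False :=
  mod_obstruction (M := 8) (by decide) α β h

lemma obsN500 (α β : ℤ) (h : β^2 = -500*α^4 + 200*α^2 + (-6)) : False :=
  mod_obstruction (M := 8) (by decide) α β h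

lemma obsP600 (α β : ℤ) (h : β^2 = 600*α^4 + 200*α^2 + 5) : False :=
  mod_obstruction (M := 8) (by decide) α β h

lemma obsN600 (α β : ℤ) (h : β^2 = -600*α^4 + 200*α^2 + (-5)) : False :=
  mod_obstruction (M := 8) (by decide) α β h

lemma obsP750 (α β : ℤ) (hcop : IsCoprime α β) (h : β^2 = 750*α^4 + 200*α^2 + 4) : False :=
  mod_obstruction_cop (M := 8) (p := 2) (by norm_num) (by decide) α β hcop (by norm_num [Int.isUnit_iff]) h

lemma obsN750 (α β : ℤ) (h : β^2 = -750*α^4 + 200*α^2 + (-4)) : False :=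
  mod_obstruction (M := 16) (by decide) α β h

lemma obsP1000 (α β : ℤ) (h : β^2 = 1000*α^4 + 200*α^2 + 3) : False :=
  mod_obstruction (M := 8) (by decide) α β h

lemma obsN1000 (α β : ℤ) (h : β^2 = -1000*α^4 + 200*α^2 + (-3)) : False :=
  mod_obstruction (M := 8) (by decide) α β h

lemma obsP1500 (α β : ℤ) (h : β^2 = 1500*α^4 + 200*α^2 + 2) : False :=
  mod_obstruction (M := 8) (by decide) α β h

lemma obsN1500 (α β : ℤ) (h : β^2 = -1500*α^4 + 200*α^2 + (-2)) : False :=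
  mod_obstruction (M := 8) (by decide) α β h

lemma obsN3000 (α β : ℤ) (h : β^2 = -3000*α^4 + 200*α^2 + (-1)) : False :=
  mod_obstruction (M := 8) (by decide) α β h


lemma case_g_one (α β : ℤ) (h : β ^ 2 = 1*α ^ 4 + 200 * α ^ 2 + 3000) : False := by
  obtain ⟨S, hS, hSnn⟩ : ∃ S : ℤ, α ^ 2 = S ∧ 0 ≤ S := ⟨_, rfl, sq_nonneg α⟩
  obtain ⟨B, hB, hBnn⟩ : ∃ B : ℤ, |β| = B ∧ 0 ≤ B := ⟨_, rfl, abs_nonneg β⟩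
  have habs : B ^ 2 = β ^ 2 := by rw [← hB]; exact sq_abs β
  have hS4 : α ^ 4 = S ^ 2 := by rw [← hS]; ring
  have key : (S + 100 - B) * (S + 100 + B) = 7000 := by
    linear_combination -habs - h - hS4 - 200 * hS
  obtain ⟨D, hD⟩ : ∃ D : ℤ, S + 100 - B = D := ⟨_, rfl⟩
  rw [hD] at key
  have hDpos : 1 ≤ D := by nlinarith
  have hDle : D ≤ 83 := by nlinarith
  interval_cases D <;> try omega
  · exact no_sq_val (M := 8) (v := 1651) (by decide) α (hS.trans (by omega))
  · exact no_sq_val (M := 5) (v := 777) (by decide) α (hS.trans (by omega))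
  · exact no_sq_val (M := 8) (v := 255) (by decide) α (hS.trans (by omega))
  · exact no_sq_val (M := 8) (v := 157) (by decide) α (hS.trans (by omega))
  · exact no_sq_val (M := 8) (v := 85) (by decide) α (hS.trans (by omega))
  · exact no_sq_val (M := 8) (v := 39) (by decide) α (hS.trans (by omega))

set_option maxHeartbeats 1000000 in
theorem integral_points_alpha_ten (X Y : ℤ) :
    Y^2 = X * (X^2 + 200*X + 3000) ↔ (X, Y) = (0, 0) := by
  constructor
  swap
  · intro h
    rw [Prod.mk.injEq] at h
    rw [h.1, h.2]; ring
  intro h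
  by_cases hX0 : X = 0
  · subst hX0
    have h0 : Y ^ 2 = 0 := by linarith
    have hY : Y = 0 := pow_eq_zero_iff two_ne_zero |>.mp h0
    rw [hY]
  exfalso
  have hQ0 : X ^ 2 + 200 * X + 3000 ≠ 0 := by
    intro hq
    exact no_sq_val (M := 16) (v := 7000) (by decide) (X + 100) (by linear_combination hq)
  obtain ⟨g, hg⟩ : ∃ g : ℕ, Int.gcd X (X ^ 2 + 200 * X + 3000) = g := ⟨_, rfl⟩
  have hgpos : 0 < g := by
    rw [← hg]
    exact Int.gcd_pos_of_ne_zero_left _ hX0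
  have hdne : ((g : ℤ)) ≠ 0 := by exact_mod_cast Nat.pos_iff_ne_zero.mp hgpos
  obtain ⟨a, ha⟩ : ((g : ℤ)) ∣ X := hg ▸ Int.gcd_dvd_left _ _
  obtain ⟨b, hb⟩ : ((g : ℤ)) ∣ (X ^ 2 + 200 * X + 3000) := hg ▸ Int.gcd_dvd_right _ _
  have hcop : IsCoprime a b := by
    rw [Int.isCoprime_iff_gcd_eq_one]
    have hq := Int.gcd_div_gcd_div_gcd (i := X) (j := X ^ 2 + 200 * X + 3000) (by omega)
    rw [hg] at hq
    have ha' : X / (g : ℤ) = a := by rw [ha]; exact Int.mul_ediv_cancel_left a hdne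
    have hb' : (X ^ 2 + 200 * X + 3000) / (g : ℤ) = b := by
      rw [hb]; exact Int.mul_ediv_cancel_left b hdne
    rwa [ha', hb'] at hq
  have hy2 : Y ^ 2 = (g : ℤ) ^ 2 * (a * b) := by rw [h, hb, ha]; ring
  obtain ⟨y, hy⟩ : ((g : ℤ)) ∣ Y := (Int.pow_dvd_pow_iff two_ne_zero).mp ⟨a * b, hy2⟩
  have hab : a * b = y ^ 2 := by
    have h2 : (g : ℤ) ^ 2 * (a * b) = (g : ℤ) ^ 2 * y ^ 2 := by rw [← hy2, hy]; ring
    exact mul_left_cancel₀ (pow_ne_zero 2 hdne) h2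
  obtain ⟨α, hα⟩ := Int.sq_of_isCoprime hcop hab
  obtain ⟨β, hβ⟩ := Int.sq_of_isCoprime hcop.symm (by rw [mul_comm]; exact hab)
  have hmem : g ∈ Nat.divisors 3000 → (g = 1 ∨ g = 2 ∨ g = 3 ∨ g = 4 ∨ g = 5 ∨ g = 6 ∨ g = 8 ∨ g = 10 ∨ g = 12 ∨ g = 15 ∨ g = 20 ∨ g = 24 ∨ g = 25 ∨ g = 30 ∨ g = 40 ∨ g = 50 ∨ g = 60 ∨ g = 75 ∨ g = 100 ∨ g = 120 ∨ g = 125 ∨ g = 150 ∨ g = 200 ∨ g = 250 ∨ g = 300 ∨ g = 375 ∨ g = 500 ∨ g = 600 ∨ g = 750 ∨ g = 1000 ∨ g = 1500 ∨ g = 3000) := by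
    rw [divisors3000]
    intro hx
    simp only [Finset.mem_insert, Finset.mem_singleton] at hx
    exact hx
  rcases hα with hα | hα <;> rcases hβ with hβ | hβ
  · -- a = α², b = β²
    subst hα hβ
    have hcopab : IsCoprime α β := by
      have h1 : IsCoprime (α ^ 2) (β ^ 2) := hcop
      exact (h1.of_isCoprime_of_dvd_left (dvd_pow_self α two_ne_zero)).of_isCoprime_of_dvd_right
        (dvd_pow_self β two_ne_zero)
    have hXa : X = (g : ℤ) * α ^ 2 := ha
    have key : (g : ℤ) * (β ^ 2 - (g : ℤ) * α ^ 4 - 200 * α ^ 2) = 3000 := by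
      have hQ : (g : ℤ) * β ^ 2 = ((g : ℤ) * α ^ 2) ^ 2 + 200 * ((g : ℤ) * α ^ 2) + 3000 := by
        rw [← hXa, ← hb]
      linear_combination hQ
    have hdvd : g ∣ 3000 := by
      have hdd : ((g : ℤ)) ∣ ((3000 : ℕ) : ℤ) := ⟨_, by push_cast; rw [← key]⟩
      exact_mod_cast hdd
    rcases hmem (Nat.mem_divisors.mpr ⟨hdvd, by norm_num⟩) with h|h|h|h|h|h|h|h|h|h|h|h|h|h|h|h|h|h|h|h|h|h|h|h|h|h|h|h|h|h|h|h
    · rw [h] at key hXa; push_cast at key hXa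
      exact case_g_one α β (by linarith)
    · rw [h] at key hXa; push_cast at key hXa
      exact obsP2 α β (by linarith)
    · rw [h] at key hXa; push_cast at key hXa
      exact obsP3 α β (by linarith)
    · rw [h] at key hXa; push_cast at key hXa
      exact obsP4 α β (by linarith)
    · rw [h] at key hXa; push_cast at key hXa
      exact obsP5 α β (by linarith)
    · rw [h] at key hXa; push_cast at key hXa
      exact obsP6 α β (by linarith)
    · rw [h] at key hXa; push_cast at key hXa
      exact obsP8 α β (by linarith)
    · rw [h] at key hXa; push_cast at key hXa
      exact obsP10 α β (by linarith)
    · rw [h] at key hXa; push_cast at key hXa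
      exact obsP12 α β (by linarith)
    · rw [h] at key hXa; push_cast at key hXa
      exact obsP15 α β (by linarith)
    · rw [h] at key hXa; push_cast at key hXa
      exact obsP20 α β (by linarith)
    · rw [h] at key hXa; push_cast at key hXa
      exact obsP24 α β (by linarith)
    · rw [h] at key hXa; push_cast at key hXa
      exact obsP25 α β (by linarith)
    · rw [h] at key hXa; push_cast at key hXa
      exact obsP30 α β hcopab (by linarith)
    · rw [h] at key hXa; push_cast at key hXa
      exact obsP40 α β (by linarith)
    · rw [h] at key hXa; push_cast at key hXa
      exact obsP50 α β (by linarith)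
    · rw [h] at key hXa; push_cast at key hXa
      exact obsP60 α β (by linarith)
    · rw [h] at key hXa; push_cast at key hXa
      exact obsP75 α β (by linarith)
    · rw [h] at key hXa; push_cast at key hXa
      exact obsP100 α β (by linarith)
    · rw [h] at key hXa; push_cast at key hXa
      exact obsP120 α β hcopab (by linarith)
    · rw [h] at key hXa; push_cast at key hXa
      exact obsP125 α β (by linarith)
    · rw [h] at key hXa; push_cast at key hXa
      exact obsP150 α β (by linarith)
    · rw [h] at key hXa; push_cast at key hXa
      exact obsP200 α β (by linarith)
    · rw [h] at key hXa; push_cast at key hXa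
      exact obsP250 α β (by linarith)
    · rw [h] at key hXa; push_cast at key hXa
      exact obsP300 α β (by linarith)
    · rw [h] at key hXa; push_cast at key hXa
      exact obsP375 α β (by linarith)
    · rw [h] at key hXa; push_cast at key hXa
      exact obsP500 α β (by linarith)
    · rw [h] at key hXa; push_cast at key hXa
      exact obsP600 α β (by linarith)
    · rw [h] at key hXa; push_cast at key hXa
      exact obsP750 α β hcopab (by linarith)
    · rw [h] at key hXa; push_cast at key hXa
      exact obsP1000 α β (by linarith)
    · rw [h] at key hXa; push_cast at key hXa
      exact obsP1500 α β (by linarith)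
    · rw [h] at key hXa; push_cast at key hXa
      exact hX0 (by rw [hXa, quartic_case α β (by linarith)]; ring)
  · -- a = α², b = -β² : mixed
    subst hα hβ
    have h0 : y ^ 2 + (α * β) ^ 2 = 0 := by linear_combination -hab
    have h2 : (α * β) ^ 2 = 0 := by nlinarith [sq_nonneg y, sq_nonneg (α * β)]
    rcases mul_eq_zero.mp (pow_eq_zero_iff two_ne_zero |>.mp h2) with h3 | h3
    · exact hX0 (by rw [ha, h3]; ring)
    · exact hQ0 (by rw [hb, h3]; ring)
  · -- a = -α², b = β² : mixed
    subst hα hβ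
    have h0 : y ^ 2 + (α * β) ^ 2 = 0 := by linear_combination -hab
    have h2 : (α * β) ^ 2 = 0 := by nlinarith [sq_nonneg y, sq_nonneg (α * β)]
    rcases mul_eq_zero.mp (pow_eq_zero_iff two_ne_zero |>.mp h2) with h3 | h3
    · exact hX0 (by rw [ha, h3]; ring)
    · exact hQ0 (by rw [hb, h3]; ring)
  · -- a = -α², b = -β²
    subst hα hβ
    have key : (g : ℤ) * (-β ^ 2 - (g : ℤ) * α ^ 4 + 200 * α ^ 2) = 3000 := by
      have hQ : (g : ℤ) * (-β ^ 2) = X ^ 2 + 200 * X + 3000 := by rw [hb]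
      rw [ha] at hQ
      linear_combination hQ
    have hdvd : g ∣ 3000 := by
      have hdd : ((g : ℤ)) ∣ ((3000 : ℕ) : ℤ) := ⟨_, by push_cast; rw [← key]⟩
      exact_mod_cast hdd
    rcases hmem (Nat.mem_divisors.mpr ⟨hdvd, by norm_num⟩) with h|h|h|h|h|h|h|h|h|h|h|h|h|h|h|h|h|h|h|h|h|h|h|h|h|h|h|h|h|h|h|h
    · rw [h] at key; push_cast at key
      exact obsN1 α β (by linarith)
    · rw [h] at key; push_cast at key
      exact obsN2 α β (by linarith)
    · rw [h] at key; push_cast at key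
      exact obsN3 α β (by linarith)
    · rw [h] at key; push_cast at key
      exact obsN4 α β (by linarith)
    · rw [h] at key; push_cast at key
      exact obsN5 α β (by linarith)
    · rw [h] at key; push_cast at key
      exact obsN6 α β (by linarith)
    · rw [h] at key; push_cast at key
      exact obsN8 α β (by linarith)
    · rw [h] at key; push_cast at key
      exact obsN10 α β (by linarith)
    · rw [h] at key; push_cast at key
      exact obsN12 α β (by linarith)
    · rw [h] at key; push_cast at key
      exact obsN15 α β (by linarith)
    · rw [h] at key; push_cast at key
      exact obsN20 α β (by linarith)
    · rw [h] at key; push_cast at key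
      exact obsN24 α β (by linarith)
    · rw [h] at key; push_cast at key
      exact obsN25 α β (by linarith)
    · rw [h] at key; push_cast at key
      exact obsN30 α β (by linarith)
    · rw [h] at key; push_cast at key
      exact obsN40 α β (by linarith)
    · rw [h] at key; push_cast at key
      exact obsN50 α β (by linarith)
    · rw [h] at key; push_cast at key
      exact obsN60 α β (by linarith)
    · rw [h] at key; push_cast at key
      exact obsN75 α β (by linarith)
    · rw [h] at key; push_cast at key
      exact obsN100 α β (by linarith)
    · rw [h] at key; push_cast at key
      exact obsN120 α β (by linarith)
    · rw [h] at key; push_cast at key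
      exact obsN125 α β (by linarith)
    · rw [h] at key; push_cast at key
      exact obsN150 α β (by linarith)
    · rw [h] at key; push_cast at key
      exact obsN200 α β (by linarith)
    · rw [h] at key; push_cast at key
      exact obsN250 α β (by linarith)
    · rw [h] at key; push_cast at key
      exact obsN300 α β (by linarith)
    · rw [h] at key; push_cast at key
      exact obsN375 α β (by linarith)
    · rw [h] at key; push_cast at key
      exact obsN500 α β (by linarith)
    · rw [h] at key; push_cast at key
      exact obsN600 α β (by linarith)
    · rw [h] at key; push_cast at key
      exact obsN750 α β (by linarith)
    · rw [h] at key; push_cast at key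
      exact obsN1000 α β (by linarith)
    · rw [h] at key; push_cast at key
      exact obsN1500 α β (by linarith)
    · rw [h] at key; push_cast at key
      exact obsN3000 α β (by linarith)
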